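/- Removing a point from a finite set S can only affect the layer membership of points in the same or later layers: if q is in layer j of S and p is in layer i of S with j < i, then q is still in layer j of S \ {p}. -/
import Mathlib


open scoped Classical

/-- `p` dominates `q`. -/
def dom (p q : ℝ × ℝ) : Prop :=
  (p.1 ≤ q.1 ∧ p.2 < q.2) ∨ (p.1 < q.1 ∧ p.2 ≤ q.2)

/-- Dominance score of `p` in `S`. -/
noncomputable def score (S : Finset (ℝ × ℝ)) (p : ℝ × ℝ) : ℕ :=
  (S.filter (fun q => dom p q)).card

/-- Maxima of `S`: points dominated by no point of `S`. -/
noncomputable def maxima (S : Finset (ℝ × ℝ)) : Finset (ℝ × ℝ) :=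
  S.filter (fun p => ∀ q ∈ S, ¬ dom q p)

/-- Points remaining after removing the first `i` layers of maxima. -/
noncomputable def rest (S : Finset (ℝ × ℝ)) : ℕ → Finset (ℝ × ℝ)
  | 0 => S
  | i + 1 => rest S i \ maxima (rest S i)

/-- The `i`-th layer of maxima (layers indexed from 1). -/
noncomputable def layer (S : Finset (ℝ × ℝ)) (i : ℕ) : Finset (ℝ × ℝ) :=
  maxima (rest S (i - 1))

/-- There is a dominance chain of length `j` in `S` starting at `p`
(each next element dominates the previous). -/
def IsChainFrom (S : Finset (ℝ × ℝ)) (p : ℝ × ℝ) (j : ℕ) : Prop :=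
  ∃ f : ℕ → ℝ × ℝ, f 0 = p ∧ (∀ t, t < j → f t ∈ S) ∧
    ∀ t, t + 1 < j → dom (f (t + 1)) (f t)

lemma dom_trans {a b c : ℝ × ℝ} (h1 : dom a b) (h2 : dom b c) : dom a c := by
  rcases h1 with ⟨h1x, h1y⟩ | ⟨h1x, h1y⟩ <;> rcases h2 with ⟨h2x, h2y⟩ | ⟨h2x, h2y⟩
  · exact Or.inl ⟨le_trans h1x h2x, lt_trans h1y h2y⟩
  · exact Or.inr ⟨lt_of_le_of_lt h1x h2x, le_of_lt (lt_of_lt_of_le h1y h2y)⟩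
  · exact Or.inl ⟨le_of_lt (lt_of_lt_of_le h1x h2x), lt_of_le_of_lt h1y h2y⟩
  · exact Or.inr ⟨lt_trans h1x h2x, le_trans h1y h2y⟩

lemma dom_irrefl (a : ℝ × ℝ) : ¬ dom a a := by
  rintro (⟨_, h⟩ | ⟨h, _⟩) <;> exact lt_irrefl _ h

lemma maxima_subset (T : Finset (ℝ × ℝ)) : maxima T ⊆ T := Finset.filter_subset _ _

lemma maxima_erase {T : Finset (ℝ × ℝ)} {p r : ℝ × ℝ} (hr : r ∈ T) (hdom : dom r p) :
    maxima (T.erase p) = maxima T := by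
  ext q
  simp only [maxima, Finset.mem_filter, Finset.mem_erase]
  constructor
  · rintro ⟨⟨hqp, hqT⟩, hmax⟩
    refine ⟨hqT, fun s hs hds => ?_⟩
    by_cases hsp : s = p
    · have hrp : r ≠ p := fun h => dom_irrefl p (h ▸ hdom)
      exact hmax r ⟨hrp, hr⟩ (dom_trans hdom (hsp ▸ hds))
    · exact hmax s ⟨hsp, hs⟩ hds
  · rintro ⟨hqT, hmax⟩
    have hqp : q ≠ p := by
      rintro rfl
      exact hmax r hr hdom
    exact ⟨⟨hqp, hqT⟩, fun s hs hds => hmax s hs.2 hds⟩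

lemma rest_succ_subset (S : Finset (ℝ × ℝ)) (k : ℕ) : rest S (k + 1) ⊆ rest S k := by
  rw [rest]; exact Finset.sdiff_subset

lemma rest_le_subset (S : Finset (ℝ × ℝ)) {k m : ℕ} (h : k ≤ m) : rest S m ⊆ rest S k := by
  induction h with
  | refl => exact Finset.Subset.refl _
  | step h ih => exact Finset.Subset.trans (rest_succ_subset S _) ih

lemma exists_dom_of_mem_rest_succ {S : Finset (ℝ × ℝ)} {p : ℝ × ℝ} {k : ℕ}
    (h : p ∈ rest S (k + 1)) : ∃ r ∈ rest S k, dom r p := by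
  rw [rest, Finset.mem_sdiff] at h
  obtain ⟨hpk, hpm⟩ := h
  simp only [maxima, Finset.mem_filter, not_and, not_forall] at hpm
  obtain ⟨r, hr, hdr⟩ := hpm hpk
  exact ⟨r, hr, not_not.mp hdr⟩

lemma rest_erase (S : Finset (ℝ × ℝ)) (p : ℝ × ℝ) {m : ℕ} (hpm : p ∈ rest S m) :
    ∀ k, k ≤ m → rest (S.erase p) k = (rest S k).erase p := by
  intro k
  induction k with
  | zero => intro _; rfl
  | succ k ih =>
    intro hkm
    have hk : k ≤ m := Nat.le_of_succ_le hkm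
    have hps : p ∈ rest S (k + 1) := rest_le_subset S hkm hpm
    obtain ⟨r, hr, hdr⟩ := exists_dom_of_mem_rest_succ hps
    rw [rest, ih hk, maxima_erase hr hdr, rest]
    ext x
    simp only [Finset.mem_sdiff, Finset.mem_erase]
    tauto

theorem erase_preserves_earlier_layers (S : Finset (ℝ × ℝ)) (i j : ℕ)
    (hj : 1 ≤ j) (hji : j < i) (p q : ℝ × ℝ)
    (hp : p ∈ layer S i) (hq : q ∈ layer S j) :
    q ∈ layer (S.erase p) j := by
  have hpm : p ∈ rest S (i - 1) := maxima_subset _ hp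
  have hjm : j ≤ i - 1 := Nat.le_sub_one_of_lt hji
  have hj1 : j - 1 + 1 = j := Nat.succ_pred_eq_of_pos hj
  have hpj : p ∈ rest S j := rest_le_subset S hjm hpm
  have hpj' : p ∈ rest S (j - 1 + 1) := by rw [hj1]; exact hpj
  obtain ⟨r, hr, hdr⟩ := exists_dom_of_mem_rest_succ hpj'
  have hrw : rest (S.erase p) (j - 1) = (rest S (j - 1)).erase p :=
    rest_erase S p hpm (j - 1) (le_trans (Nat.sub_le j 1) hjm)
  rw [layer, hrw, maxima_erase hr hdr]
  exact hq
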